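/- Let π be a torsion-free group such that the centralizer Z({g}) of every nontrivial element g ∈ π is cyclic. Then for any two nontrivial elements g₁, g₂ ∈ π, either Z({g₁}) = Z({g₂}) or Z({g₁}) ∩ Z({g₂}) is the trivial subgroup. -/

import Mathlib

/-- A monoid is torsion-free if every non-identity element has infinite order (the
Mathlib definition of December 2024, since removed). -/
def Monoid.IsTorsionFree (G : Type*) [Monoid G] : Prop :=
  ∀ g : G, g ≠ 1 → ¬IsOfFinOrder g

lemma cent_eq_of_mem {π : Type*} [Group π]
    (hcyc : ∀ g : π, g ≠ 1 → ∃ x : π, Subgroup.centralizer {g} = Subgroup.zpowers x)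
    (g h : π) (hg : g ≠ 1) (hh : h ≠ 1) (hmem : h ∈ Subgroup.centralizer {g}) :
    Subgroup.centralizer {g} = Subgroup.centralizer {h} := by
  apply le_antisymm
  · -- Z{g} is cyclic hence abelian, and h ∈ Z{g}
    obtain ⟨x, hx⟩ := hcyc g hg
    intro a ha
    rw [Subgroup.mem_centralizer_iff]
    rintro y rfl
    rw [hx] at ha hmem
    obtain ⟨i, hi⟩ := ha
    obtain ⟨j, hj⟩ := hmem
    rw [← hi, ← hj]
    exact (Commute.zpow_zpow_self x j i)
  · obtain ⟨y, hy⟩ := hcyc h hh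
    have hgmem : g ∈ Subgroup.centralizer {h} := by
      rw [Subgroup.mem_centralizer_iff]
      rintro z rfl
      have := Subgroup.mem_centralizer_iff.mp hmem g rfl
      exact this.symm
    rw [hy] at hgmem ⊢
    obtain ⟨k, hk⟩ := hgmem
    intro a ha
    obtain ⟨i, hi⟩ := ha
    rw [Subgroup.mem_centralizer_iff]
    rintro z rfl
    rw [← hk, ← hi]
    exact (Commute.zpow_zpow_self y k i)

/-- In a torsion-free group in which the centralizer of every nontrivial
element is cyclic, any two centralizers of nontrivial elements either coincide
or intersect trivially. -/
theorem stmt6 {π : Type*} [Group π] (htf : Monoid.IsTorsionFree π)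
    (hcyc : ∀ g : π, g ≠ 1 → ∃ x : π, Subgroup.centralizer {g} = Subgroup.zpowers x) :
    ∀ g₁ g₂ : π, g₁ ≠ 1 → g₂ ≠ 1 →
      Subgroup.centralizer {g₁} = Subgroup.centralizer {g₂} ∨
      Subgroup.centralizer {g₁} ⊓ Subgroup.centralizer {g₂} = ⊥ := by
  intro g₁ g₂ h₁ h₂
  by_cases hbot : Subgroup.centralizer {g₁} ⊓ Subgroup.centralizer {g₂} = ⊥
  · exact Or.inr hbot
  · left
    rw [Subgroup.eq_bot_iff_forall] at hbot
    push_neg at hbot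
    obtain ⟨h, hmem, hne⟩ := hbot
    obtain ⟨hm1, hm2⟩ := hmem
    rw [cent_eq_of_mem hcyc g₁ h h₁ hne hm1, cent_eq_of_mem hcyc g₂ h h₂ hne hm2]
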